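/- Stretch composition for the reduction: if A is a hub-labeling scheme of stretch α ≥ 1 for the decremental subgraph G_A = (V, F \ D) of G, B has stretch β ≥ 1 on the auxiliary graph H containing the inserted edges together with the hub edges, and H's edge weights satisfy w_H(x,y) ≤ min over applicable of (w_G(x,y), δ(x,y), δ(y,x)), then the combined query answer δ_C(s,t) = min(min_{p∈S(s)∩V(H), q∈S(t)∩V(H)} (δ(s,p)+δ_B(p,q)+δ(t,q)), δ_A(s,t)) satisfies dist_G(s,t) ≤ δ_C(s,t) ≤ α·β·dist_G(s,t). -/

import Mathlib

open scoped ENNReal BigOperators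

variable {V : Type*}

/-- The length of a walk (given as a list of vertices) with respect to edge weights `w`.
Absent edges are modeled by weight `∞`. -/
noncomputable def walkLength (w : V → V → ℝ≥0∞) : List V → ℝ≥0∞
  | [] => 0
  | [_] => 0
  | a :: b :: rest => w a b + walkLength w (b :: rest)

/-- `p` is a walk from `s` to `t`. -/
def IsWalk (s t : V) (p : List V) : Prop :=
  p.head? = some s ∧ p.getLast? = some t

/-- Shortest-path distance induced by edge weights `w`. -/
noncomputable def gdist (w : V → V → ℝ≥0∞) (s t : V) : ℝ≥0∞ :=
  ⨅ p : {l : List V // IsWalk s t l}, walkLength w p.1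

section Helpers

variable {w w₁ w₂ : V → V → ℝ≥0∞}

lemma walkLength_cons_cons (w : V → V → ℝ≥0∞) (a b : V) (l : List V) :
    walkLength w (a :: b :: l) = w a b + walkLength w (b :: l) := rfl

lemma walkLength_mono (h : ∀ x y, w₁ x y ≤ w₂ x y) :
    ∀ l, walkLength w₁ l ≤ walkLength w₂ l
  | [] => le_rfl
  | [_] => le_rfl
  | a :: b :: l => add_le_add (h a b) (walkLength_mono h (b :: l))

lemma gdist_le_walkLength {s t : V} {l : List V} (hl : IsWalk s t l) :
    gdist w s t ≤ walkLength w l :=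
  iInf_le (fun p : {l : List V // IsWalk s t l} => walkLength w p.1) ⟨l, hl⟩

lemma isWalk_single (a : V) : IsWalk a a [a] := ⟨rfl, rfl⟩

lemma gdist_self (w : V → V → ℝ≥0∞) (a : V) : gdist w a a = 0 :=
  le_antisymm (gdist_le_walkLength (isWalk_single a)) zero_le

lemma gdist_le_weight (w : V → V → ℝ≥0∞) (a b : V) : gdist w a b ≤ w a b := by
  have h : IsWalk a b [a, b] := ⟨rfl, rfl⟩
  exact (gdist_le_walkLength h).trans_eq (add_zero _)

lemma gdist_mono (h : ∀ x y, w₁ x y ≤ w₂ x y) (a b : V) :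
    gdist w₁ a b ≤ gdist w₂ a b :=
  le_iInf fun l => (gdist_le_walkLength l.2).trans (walkLength_mono h l.1)

lemma gdist_cons {a c : V} (b : V) : gdist w a c ≤ w a b + gdist w b c := by
  have hrw : w a b + gdist w b c
      = ⨅ m : {l : List V // IsWalk b c l}, (w a b + walkLength w m.1) := ENNReal.add_iInf
  rw [hrw]
  refine le_iInf fun m => ?_
  obtain ⟨l, h1, h2⟩ := m
  cases l with
  | nil => simp at h1
  | cons b' l' =>
    have hb : b' = b := by simpa using h1
    subst hb
    have hw : IsWalk a c (a :: b' :: l') :=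
      ⟨rfl, by simpa [List.getLast?_cons_cons] using h2⟩
    exact gdist_le_walkLength hw

lemma gdist_walk_trans (w : V → V → ℝ≥0∞) {b c : V} :
    ∀ (l : List V) (a : V), IsWalk a b l →
      gdist w a c ≤ walkLength w l + gdist w b c := by
  intro l
  induction l with
  | nil => intro a h; simp [IsWalk] at h
  | cons x l ih =>
    intro a h
    have hx : x = a := by simpa using h.1
    subst hx
    cases l with
    | nil =>
      have hb : x = b := by simpa [IsWalk] using h.2
      subst hb
      simpa [walkLength] using le_rfl
    | cons y l' =>
      have hw : IsWalk y b (y :: l') :=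
        ⟨rfl, by simpa [List.getLast?_cons_cons] using h.2⟩
      have step := ih y hw
      calc gdist w x c ≤ w x y + gdist w y c := gdist_cons y
        _ ≤ w x y + (walkLength w (y :: l') + gdist w b c) :=
            add_le_add_right step _
        _ = walkLength w (x :: y :: l') + gdist w b c := by
            rw [walkLength_cons_cons, add_assoc]

lemma gdist_triangle {a c : V} (b : V) :
    gdist w a c ≤ gdist w a b + gdist w b c := by
  have hrw : gdist w a b + gdist w b c
      = ⨅ l : {l : List V // IsWalk a b l}, (walkLength w l.1 + gdist w b c) :=
    ENNReal.iInf_add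
  rw [hrw]
  exact le_iInf fun l => gdist_walk_trans w l.1 a l.2

lemma gdist_dominated (h : ∀ x y, gdist w₁ x y ≤ w₂ x y) {a b : V} :
    gdist w₁ a b ≤ gdist w₂ a b := by
  refine le_iInf fun m => ?_
  obtain ⟨l, hl⟩ := m
  induction l generalizing a with
  | nil => simp [IsWalk] at hl
  | cons x l ih =>
    have hx : x = a := by simpa using hl.1
    subst hx
    cases l with
    | nil =>
      have hb : x = b := by simpa [IsWalk] using hl.2
      subst hb
      simpa [walkLength] using (gdist_self w₁ x).le
    | cons y l' =>
      have hw : IsWalk y b (y :: l') :=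
        ⟨rfl, by simpa [List.getLast?_cons_cons] using hl.2⟩
      calc gdist w₁ x b ≤ gdist w₁ x y + gdist w₁ y b := gdist_triangle y
        _ ≤ w₂ x y + walkLength w₂ (y :: l') :=
            add_le_add (h x y) (ih hw)
        _ = walkLength w₂ (x :: y :: l') := (walkLength_cons_cons w₂ x y l').symm

lemma walkLength_concat (w : V → V → ℝ≥0∞) (y : V) :
    ∀ l : List V, walkLength w (l ++ [y])
      = walkLength w l + (l.getLast?).elim 0 (fun x => w x y) := by
  intro l
  induction l with
  | nil => simp [walkLength]
  | cons a l ih =>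
    cases l with
    | nil => simp [walkLength]
    | cons b l' =>
      simp only [List.cons_append] at ih ⊢
      rw [walkLength_cons_cons, ih, walkLength_cons_cons, List.getLast?_cons_cons]
      ring

lemma walkLength_reverse (hsym : ∀ x y, w x y = w y x) :
    ∀ l : List V, walkLength w l.reverse = walkLength w l := by
  intro l
  induction l with
  | nil => rfl
  | cons a l ih =>
    rw [List.reverse_cons, walkLength_concat, List.getLast?_reverse, ih]
    cases l with
    | nil => simp [walkLength]
    | cons b l' =>
      rw [walkLength_cons_cons]
      simp [hsym b a, add_comm]

lemma isWalk_reverse {s t : V} {l : List V} (h : IsWalk s t l) :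
    IsWalk t s l.reverse :=
  ⟨by rw [List.head?_reverse]; exact h.2, by rw [List.getLast?_reverse]; exact h.1⟩

lemma gdist_symm (hsym : ∀ x y, w x y = w y x) (a b : V) :
    gdist w a b = gdist w b a := by
  have key : ∀ x y : V, gdist w x y ≤ gdist w y x := by
    intro x y
    refine le_iInf fun m => ?_
    have := gdist_le_walkLength (w := w) (isWalk_reverse m.2)
    rwa [walkLength_reverse hsym] at this
  exact le_antisymm (key a b) (key b a)

lemma gdist_pos [Fintype V] (hpos : ∀ x y, 0 < w x y) {s t : V} (h : s ≠ t) :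
    0 < gdist w s t := by
  obtain ⟨p, -, hp⟩ := Finset.exists_min_image (Finset.univ : Finset (V × V))
    (fun p => w p.1 p.2) ⟨(s, t), Finset.mem_univ _⟩
  refine lt_of_lt_of_le (hpos p.1 p.2) (le_iInf fun m => ?_)
  obtain ⟨l, h1, h2⟩ := m
  cases l with
  | nil => simp at h1
  | cons x l' =>
    have hx : x = s := by simpa using h1
    subst hx
    cases l' with
    | nil =>
      have : x = t := by simpa using h2
      exact absurd this h
    | cons y l'' =>
      calc w p.1 p.2 ≤ w x y := hp (x, y) (Finset.mem_univ _)
        _ ≤ walkLength w (x :: y :: l'') := le_add_right le_rfl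

end Helpers

/-- stretch composition for the reduction.  G has weights
wG = min(wA, wI) (decremental part F \ D and inserted part I); A is a hub-labeling scheme of
stretch α on G_A; the auxiliary graph H contains the inserted edges and hub edges with weights
dominated by the corresponding wG / δ values and dominating G-distances; δ_B has stretch β
on H.  Then the combined answer δ_C satisfies dist_G ≤ δ_C ≤ αβ · dist_G. -/
theorem reduction_stretch_composition {V : Type*} [Fintype V]
    (wA wI wG : V → V → ℝ≥0∞)
    (hG : ∀ x y, wG x y = min (wA x y) (wI x y))
    (hposG : ∀ x y, 0 < wG x y)
    (hsymA : ∀ x y, wA x y = wA y x) (hsymI : ∀ x y, wI x y = wI y x)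
    (α β : ℝ≥0∞) (hα : 1 ≤ α) (hβ : 1 ≤ β)
    (S : V → Set V) (δ : V → V → ℝ≥0∞)
    (hδ : ∀ v u, u ∈ S v → gdist wA v u ≤ δ v u)
    (hAstretch : ∀ x y, (⨅ z ∈ S x ∩ S y, (δ x z + δ y z)) ≤ α * gdist wA x y)
    (VH : Set V) (wH : V → V → ℝ≥0∞) (hsymH : ∀ x y, wH x y = wH y x)
    (hHlb : ∀ x y, gdist wG x y ≤ wH x y)
    (hHedge : ∀ x y, wI x y < ⊤ → wH x y ≤ wG x y ∧ x ∈ VH ∧ y ∈ VH)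
    (hHhub : ∀ x y, wI x y < ⊤ → ∀ z ∈ S x, wH x z ≤ δ x z ∧ z ∈ VH)
    (δB : V → V → ℝ≥0∞)
    (hB : ∀ p q, gdist wH p q ≤ δB p q ∧ δB p q ≤ β * gdist wH p q) :
    ∀ s t : V,
      gdist wG s t ≤
        min (⨅ p ∈ S s ∩ VH, ⨅ q ∈ S t ∩ VH, (δ s p + δB p q + δ t q))
          (⨅ z ∈ S s ∩ S t, (δ s z + δ t z)) ∧
      min (⨅ p ∈ S s ∩ VH, ⨅ q ∈ S t ∩ VH, (δ s p + δB p q + δ t q))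
          (⨅ z ∈ S s ∩ S t, (δ s z + δ t z)) ≤ α * β * gdist wG s t := by
  have hα0 : α ≠ 0 := (lt_of_lt_of_le one_pos hα).ne'
  have hβ0 : β ≠ 0 := (lt_of_lt_of_le one_pos hβ).ne'
  have hsymG : ∀ x y, wG x y = wG y x := fun x y => by
    rw [hG, hG, hsymA, hsymI]
  have hGA : ∀ x y, wG x y ≤ wA x y := fun x y => by
    rw [hG]; exact min_le_left _ _
  have hdGA : ∀ x y, gdist wG x y ≤ gdist wA x y := fun x y => gdist_mono hGA x y
  have hdGH : ∀ x y, gdist wG x y ≤ gdist wH x y := fun x y => gdist_dominated hHlb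
  intro s t
  constructor
  · -- lower bound
    refine le_min ?_ ?_
    · refine le_iInf₂ fun p hp => le_iInf₂ fun q hq => ?_
      have h1 : gdist wG s p ≤ δ s p := (hdGA s p).trans (hδ s p hp.1)
      have h2 : gdist wG p q ≤ δB p q := (hdGH p q).trans (hB p q).1
      have h3 : gdist wG q t ≤ δ t q := by
        rw [gdist_symm hsymG]
        exact (hdGA t q).trans (hδ t q hq.1)
      calc gdist wG s t ≤ gdist wG s p + gdist wG p t := gdist_triangle p
        _ ≤ gdist wG s p + (gdist wG p q + gdist wG q t) :=
            add_le_add_right (gdist_triangle q) _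
        _ ≤ δ s p + (δB p q + δ t q) := add_le_add h1 (add_le_add h2 h3)
        _ = δ s p + δB p q + δ t q := (add_assoc _ _ _).symm
    · refine le_iInf₂ fun z hz => ?_
      have h1 : gdist wG s z ≤ δ s z := (hdGA s z).trans (hδ s z hz.1)
      have h3 : gdist wG z t ≤ δ t z := by
        rw [gdist_symm hsymG]
        exact (hdGA t z).trans (hδ t z hz.2)
      calc gdist wG s t ≤ gdist wG s z + gdist wG z t := gdist_triangle z
        _ ≤ δ s z + δ t z := add_le_add h1 h3
  · -- upper bound
    by_cases hst : s = t
    · subst hst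
      refine (min_le_right _ _).trans ?_
      calc (⨅ z ∈ S s ∩ S s, (δ s z + δ s z)) ≤ α * gdist wA s s := hAstretch s s
        _ = 0 := by rw [gdist_self, mul_zero]
        _ ≤ _ := zero_le
    by_cases hfin : α ≠ ⊤ ∧ β ≠ ⊤
    · obtain ⟨hαtop, hβtop⟩ := hfin
      have hαβ0 : α * β ≠ 0 := mul_ne_zero hα0 hβ0
      have hαβtop : α * β ≠ ⊤ := ENNReal.mul_ne_top hαtop hβtop
      -- Claim M
      have claimM : ∀ l : List V, ∀ v x : V, IsWalk x t l →
          (∀ z ∈ S v, wH v z ≤ δ v z ∧ z ∈ VH) →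
          (⨅ q : {q : V // q ∈ S t ∩ VH}, (gdist wH v q.1 + δ t q.1))
            ≤ α * (gdist wA v x + walkLength wG l) := by
        intro l
        induction l with
        | nil => intro v x h; simp [IsWalk] at h
        | cons a r ih =>
          intro v x h hub
          have hax : a = x := by simpa using h.1
          subst hax
          cases r with
          | nil =>
            have hat : a = t := by simpa [IsWalk] using h.2
            have step : (⨅ q : {q : V // q ∈ S t ∩ VH}, (gdist wH v q.1 + δ t q.1))
                ≤ ⨅ z ∈ S v ∩ S a, (δ v z + δ a z) := by
              refine le_iInf₂ fun z hz => ?_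
              obtain ⟨hzv, hza⟩ := hz
              obtain ⟨hwz, hzVH⟩ := hub z hzv
              rw [← hat]
              refine (iInf_le _ ⟨z, ⟨hza, hzVH⟩⟩).trans ?_
              exact add_le_add ((gdist_le_weight wH v z).trans hwz) le_rfl
            refine step.trans ((hAstretch v a).trans ?_)
            rw [show walkLength wG [a] = 0 from rfl, add_zero]
          | cons u r' =>
            have hwalk : IsWalk u t (u :: r') :=
              ⟨rfl, by simpa [List.getLast?_cons_cons] using h.2⟩
            by_cases hIA : wI a u ≤ wA a u
            · -- I-type edge
              have hwGau : wG a u = wI a u := by rw [hG]; exact min_eq_right hIA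
              by_cases htop : wI a u = ⊤
              · have hlen : walkLength wG (a :: u :: r') = ⊤ := by
                  rw [walkLength_cons_cons, hwGau, htop, top_add]
                rw [hlen, add_top, ENNReal.mul_top hα0]
                exact le_top
              · have hIfin : wI a u < ⊤ := lt_top_iff_ne_top.2 htop
                have hIfin' : wI u a < ⊤ := by rw [hsymI]; exact hIfin
                have hubx := hHhub a u hIfin
                have hubu := hHhub u a hIfin'
                have ihu := ih u u hwalk hubu
                rw [gdist_self, zero_add] at ihu
                have h1 : gdist wH v a ≤ α * gdist wA v a := by
                  refine le_trans ?_ (hAstretch v a)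
                  refine le_iInf₂ fun z hz => ?_
                  calc gdist wH v a ≤ gdist wH v z + gdist wH z a := gdist_triangle z
                    _ ≤ wH v z + wH a z := by
                        refine add_le_add (gdist_le_weight wH v z) ?_
                        rw [← hsymH]
                        exact gdist_le_weight wH z a
                    _ ≤ δ v z + δ a z :=
                        add_le_add (hub z hz.1).1 (hubx z hz.2).1
                have h2 : gdist wH v u ≤ α * gdist wA v a + wG a u := by
                  calc gdist wH v u ≤ gdist wH v a + gdist wH a u := gdist_triangle a
                    _ ≤ α * gdist wA v a + wG a u :=
                        add_le_add h1 ((gdist_le_weight wH a u).trans (hHedge a u hIfin).1)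
                have h3 : (⨅ q : {q : V // q ∈ S t ∩ VH}, (gdist wH v q.1 + δ t q.1))
                    ≤ gdist wH v u
                      + ⨅ q : {q : V // q ∈ S t ∩ VH}, (gdist wH u q.1 + δ t q.1) := by
                  have hrw : gdist wH v u
                        + (⨅ q : {q : V // q ∈ S t ∩ VH}, (gdist wH u q.1 + δ t q.1))
                      = ⨅ q : {q : V // q ∈ S t ∩ VH},
                          (gdist wH v u + (gdist wH u q.1 + δ t q.1)) := ENNReal.add_iInf
                  rw [hrw]
                  refine le_iInf fun q => (iInf_le _ q).trans ?_
                  rw [← add_assoc]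
                  exact add_le_add (gdist_triangle u) le_rfl
                calc (⨅ q : {q : V // q ∈ S t ∩ VH}, (gdist wH v q.1 + δ t q.1))
                    ≤ gdist wH v u
                      + ⨅ q : {q : V // q ∈ S t ∩ VH}, (gdist wH u q.1 + δ t q.1) := h3
                  _ ≤ (α * gdist wA v a + wG a u) + α * walkLength wG (u :: r') :=
                      add_le_add h2 ihu
                  _ ≤ (α * gdist wA v a + α * wG a u) + α * walkLength wG (u :: r') :=
                      add_le_add_left
                        (add_le_add_right (le_mul_of_one_le_left zero_le hα) _) _
                  _ = α * (gdist wA v a + walkLength wG (a :: u :: r')) := by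
                      rw [walkLength_cons_cons]; ring
            · -- A-type edge
              have hwGau : wG a u = wA a u := by
                rw [hG]; exact min_eq_left (le_of_lt (lt_of_not_ge hIA))
              have ihv := ih v u hwalk hub
              refine ihv.trans ?_
              have hAvu : gdist wA v u ≤ gdist wA v a + wA a u :=
                (gdist_triangle a).trans (add_le_add_right (gdist_le_weight wA a u) _)
              calc α * (gdist wA v u + walkLength wG (u :: r'))
                  ≤ α * ((gdist wA v a + wA a u) + walkLength wG (u :: r')) :=
                    mul_le_mul_right (add_le_add_left hAvu _) α
                _ = α * (gdist wA v a + walkLength wG (a :: u :: r')) := by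
                    rw [walkLength_cons_cons, hwGau]; ring
      -- Claim T
      have claimT : ∀ l : List V, ∀ x : V, IsWalk x t l →
          min (⨅ p ∈ S s ∩ VH, ⨅ q ∈ S t ∩ VH, (δ s p + δB p q + δ t q))
              (⨅ z ∈ S s ∩ S t, (δ s z + δ t z))
            ≤ α * β * (gdist wA s x + walkLength wG l) := by
        intro l
        induction l with
        | nil => intro x h; simp [IsWalk] at h
        | cons a r ih =>
          intro x h
          have hax : a = x := by simpa using h.1
          subst hax
          cases r with
          | nil =>
            have hat : a = t := by simpa [IsWalk] using h.2
            subst hat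
            refine (min_le_right _ _).trans ((hAstretch s a).trans ?_)
            have hstep : α * gdist wA s a ≤ α * (β * gdist wA s a) :=
              mul_le_mul_right (le_mul_of_one_le_left zero_le hβ) α
            refine hstep.trans_eq ?_
            rw [show walkLength wG [a] = 0 from rfl, add_zero, mul_assoc]
          | cons u r' =>
            have hwalk : IsWalk u t (u :: r') :=
              ⟨rfl, by simpa [List.getLast?_cons_cons] using h.2⟩
            by_cases hIA : wI a u ≤ wA a u
            · -- I-type edge
              have hwGau : wG a u = wI a u := by rw [hG]; exact min_eq_right hIA
              by_cases htop : wI a u = ⊤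
              · have hlen : walkLength wG (a :: u :: r') = ⊤ := by
                  rw [walkLength_cons_cons, hwGau, htop, top_add]
                rw [hlen, add_top, ENNReal.mul_top hαβ0]
                exact le_top
              · have hIfin : wI a u < ⊤ := lt_top_iff_ne_top.2 htop
                have hIfin' : wI u a < ⊤ := by rw [hsymI]; exact hIfin
                have hubx := hHhub a u hIfin
                have hubu := hHhub u a hIfin'
                have hQu := claimM (u :: r') u u hwalk hubu
                rw [gdist_self, zero_add] at hQu
                set Qu := ⨅ q : {q : V // q ∈ S t ∩ VH}, (gdist wH u q.1 + δ t q.1)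
                  with hQudef
                set X := ⨅ z : {z : V // z ∈ S s ∩ S a}, (δ s z.1 + δ a z.1) with hXdef
                have hX : X ≤ α * gdist wA s a := by
                  refine le_trans ?_ (hAstretch s a)
                  exact le_iInf₂ fun z hz =>
                    iInf_le (fun z : {z : V // z ∈ S s ∩ S a} => δ s z.1 + δ a z.1) ⟨z, hz⟩
                have key : (⨅ p ∈ S s ∩ VH, ⨅ q ∈ S t ∩ VH, (δ s p + δB p q + δ t q))
                    ≤ β * (X + (wG a u + Qu)) := by
                  rw [hXdef, ENNReal.iInf_add,
                    ENNReal.mul_iInf' (fun hc => absurd hc hβtop) (fun hc => absurd hc hβ0)]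
                  refine le_iInf fun z => ?_
                  rw [hQudef, ENNReal.add_iInf (f := fun q : {q : V // q ∈ S t ∩ VH} =>
                      gdist wH u q.1 + δ t q.1), ENNReal.add_iInf,
                    ENNReal.mul_iInf' (fun hc => absurd hc hβtop) (fun hc => absurd hc hβ0)]
                  refine le_iInf fun q => ?_
                  obtain ⟨z, hzs, hza⟩ := z
                  obtain ⟨q, hqt, hqVH⟩ := q
                  have hzVH : z ∈ VH := (hubx z hza).2
                  have step1 : (⨅ p ∈ S s ∩ VH, ⨅ q' ∈ S t ∩ VH, (δ s p + δB p q' + δ t q'))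
                      ≤ δ s z + δB z q + δ t q :=
                    le_trans (iInf₂_le z ⟨hzs, hzVH⟩) (iInf₂_le q ⟨hqt, hqVH⟩)
                  have hgd : gdist wH z q ≤ δ a z + (wG a u + gdist wH u q) := by
                    calc gdist wH z q ≤ gdist wH z a + gdist wH a q := gdist_triangle a
                      _ ≤ gdist wH z a + (gdist wH a u + gdist wH u q) :=
                          add_le_add_right (gdist_triangle u) _
                      _ ≤ δ a z + (wG a u + gdist wH u q) := by
                          refine add_le_add ?_ (add_le_add_left
                            ((gdist_le_weight wH a u).trans (hHedge a u hIfin).1) _)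
                          exact ((gdist_le_weight wH z a).trans
                            (hsymH z a).le).trans (hubx z hza).1
                  have hδB : δB z q ≤ β * (δ a z + (wG a u + gdist wH u q)) :=
                    (hB z q).2.trans (mul_le_mul_right hgd β)
                  calc (⨅ p ∈ S s ∩ VH, ⨅ q' ∈ S t ∩ VH, (δ s p + δB p q' + δ t q'))
                      ≤ δ s z + δB z q + δ t q := step1
                    _ ≤ δ s z + β * (δ a z + (wG a u + gdist wH u q)) + δ t q :=
                        add_le_add_left (add_le_add_right hδB _) _
                    _ ≤ β * δ s z + β * (δ a z + (wG a u + gdist wH u q)) + β * δ t q := by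
                        refine add_le_add (add_le_add ?_ le_rfl) ?_ <;>
                          exact le_mul_of_one_le_left zero_le hβ
                    _ = β * (δ s z + δ a z + (wG a u + (gdist wH u q + δ t q))) := by ring
                refine (min_le_left _ _).trans (key.trans ?_)
                calc β * (X + (wG a u + Qu))
                    ≤ β * (α * gdist wA s a
                        + (α * wG a u + α * walkLength wG (u :: r'))) := by
                      refine mul_le_mul_right (add_le_add hX (add_le_add ?_ hQu)) β
                      exact le_mul_of_one_le_left zero_le hα
                  _ = α * β * (gdist wA s a + walkLength wG (a :: u :: r')) := by
                      rw [walkLength_cons_cons]; ring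
            · -- A-type edge
              have hwGau : wG a u = wA a u := by
                rw [hG]; exact min_eq_left (le_of_lt (lt_of_not_ge hIA))
              refine (ih u hwalk).trans ?_
              have hAsu : gdist wA s u ≤ gdist wA s a + wA a u :=
                (gdist_triangle a).trans (add_le_add_right (gdist_le_weight wA a u) _)
              calc α * β * (gdist wA s u + walkLength wG (u :: r'))
                  ≤ α * β * ((gdist wA s a + wA a u) + walkLength wG (u :: r')) :=
                    mul_le_mul_right (add_le_add_left hAsu _) _
                _ = α * β * (gdist wA s a + walkLength wG (a :: u :: r')) := by
                    rw [walkLength_cons_cons, hwGau]; ring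
      -- conclude
      have hmul : α * β * gdist wG s t
          = ⨅ l : {l : List V // IsWalk s t l}, α * β * walkLength wG l.1 :=
        ENNReal.mul_iInf' (fun hc => absurd hc hαβtop) (fun hc => absurd hc hαβ0)
      rw [hmul]
      refine le_iInf fun l => ?_
      have := claimT l.1 s l.2
      rwa [gdist_self, zero_add] at this
    · -- α or β infinite
      have htop : α * β = ⊤ := by
        rcases not_and_or.1 hfin with h | h
        · rw [not_ne_iff.1 h, ENNReal.top_mul hβ0]
        · rw [not_ne_iff.1 h, ENNReal.mul_top hα0]
      have hpos : 0 < gdist wG s t := gdist_pos hposG hst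
      rw [htop, ENNReal.top_mul hpos.ne']
      exact le_top
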